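/- Let X be a Polish space and E an equivalence relation on X whose graph is a σ-compact (Kσ) subset of X × X, i.e., a union of countably many compact sets. Then E is Borel reducible to ℓ∞. -/

import Mathlib

/-- Borel reducibility: a Borel-measurable map `θ` with `E x x' ↔ F (θ x) (θ x')`. -/
def BorelReducible {X Y : Type*} [TopologicalSpace X] [TopologicalSpace Y]
    (E : X → X → Prop) (F : Y → Y → Prop) : Prop :=
  ∃ θ : X → Y, @Measurable X Y (borel X) (borel Y) θ ∧
    ∀ x x' : X, E x x' ↔ F (θ x) (θ x')

/-- The `ℓ∞` equivalence relation on `ℝ^ℕ`: `x ∼ y` iff the differences are bounded. -/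
def linftyRel (x y : ℕ → ℝ) : Prop := ∃ C : ℝ, ∀ n : ℕ, |x n - y n| ≤ C

namespace KsigmaLinftyAux

/-- Composition of two relations (as subsets of `X × X`). -/
def rcomp {X : Type*} (A B : Set (X × X)) : Set (X × X) :=
  {p | ∃ y, (p.1, y) ∈ A ∧ (y, p.2) ∈ B}

lemma isCompact_rcomp {X : Type*} [TopologicalSpace X] [T2Space X]
    {A B : Set (X × X)} (hA : IsCompact A) (hB : IsCompact B) :
    IsCompact (rcomp A B) := by
  have h1 : IsClosed {q : (X × X) × (X × X) | q.1.2 = q.2.1} :=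
    isClosed_eq (continuous_fst.snd) (continuous_snd.fst)
  have h2 : IsCompact ((A ×ˢ B) ∩ {q | q.1.2 = q.2.1}) :=
    (hA.prod hB).inter_right h1
  have h3 : IsCompact ((fun q : (X × X) × (X × X) => (q.1.1, q.2.2)) ''
      ((A ×ˢ B) ∩ {q | q.1.2 = q.2.1})) :=
    h2.image (by fun_prop)
  convert h3 using 1
  ext ⟨a, c⟩
  constructor
  · rintro ⟨y, h1, h2⟩
    exact ⟨((a, y), (y, c)), ⟨⟨h1, h2⟩, rfl⟩, rfl⟩
  · rintro ⟨⟨⟨a', y⟩, ⟨y', c'⟩⟩, ⟨⟨hA', hB'⟩, (heq : y = y')⟩, h⟩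
    obtain ⟨h1, h2⟩ := Prod.mk.injEq .. ▸ h
    subst h1; subst h2; subst heq
    exact ⟨y, hA', hB'⟩

end KsigmaLinftyAux

open KsigmaLinftyAux in
/-- Rosendal: every equivalence relation on a Polish space whose graph
is σ-compact (a countable union of compact subsets of `X × X`) is Borel reducible
to `ℓ∞`. -/
theorem ksigma_reducible_to_linfty
    {X : Type*} [TopologicalSpace X] [PolishSpace X]
    (E : X → X → Prop) (hE : Equivalence E)
    (hKsigma : ∃ K : ℕ → Set (X × X), (∀ n, IsCompact (K n)) ∧
      {p : X × X | E p.1 p.2} = ⋃ n, K n) :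
    BorelReducible E linftyRel := by
  classical
  obtain ⟨K, hKc, hKE⟩ := hKsigma
  rcases isEmpty_or_nonempty X with hX | hX
  · refine ⟨fun _ => 0, ?_, fun x => isEmptyElim x⟩
    intro s _
    have : (fun (_ : X) => (0 : ℕ → ℝ)) ⁻¹' s = ∅ := Set.eq_empty_of_isEmpty _
    rw [this]
    exact @MeasurableSet.empty X (borel X)
  letI := TopologicalSpace.upgradeIsCompletelyMetrizable X
  letI : MeasurableSpace X := borel X
  haveI : BorelSpace X := ⟨rfl⟩
  have hKEsub : ∀ n, K n ⊆ {p : X × X | E p.1 p.2} := by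
    intro n
    rw [hKE]; exact Set.subset_iUnion K n
  -- the increasing symmetric compact sets closed under composition
  set L : ℕ → Set (X × X) := fun n =>
    Nat.rec (K 0 ∪ Prod.swap '' K 0)
      (fun n Ln => (Ln ∪ (K (n+1) ∪ Prod.swap '' K (n+1))) ∪ rcomp Ln Ln) n with hL
  have hL0 : L 0 = K 0 ∪ Prod.swap '' K 0 := rfl
  have hLsucc : ∀ n, L (n+1) = (L n ∪ (K (n+1) ∪ Prod.swap '' K (n+1))) ∪ rcomp (L n) (L n) :=
    fun n => rfl
  have hLc : ∀ n, IsCompact (L n) := by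
    intro n
    induction n with
    | zero => exact (hKc 0).union ((hKc 0).image continuous_swap)
    | succ n ih =>
      rw [hLsucc]
      exact (ih.union ((hKc (n+1)).union ((hKc (n+1)).image continuous_swap))).union
        (isCompact_rcomp ih ih)
  have hLE : ∀ n, L n ⊆ {p : X × X | E p.1 p.2} := by
    intro n
    induction n with
    | zero =>
      rintro p (hp | ⟨q, hq, rfl⟩)
      · exact hKEsub 0 hp
      · exact hE.symm (hKEsub 0 hq)
    | succ n ih =>
      intro p hp
      rw [hLsucc n] at hp
      rcases hp with ((hp | (hp | ⟨q, hq, rfl⟩)) | ⟨y, h1, h2⟩)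
      · exact ih hp
      · exact hKEsub (n+1) hp
      · exact hE.symm (hKEsub (n+1) hq)
      · have e1 : E p.1 y := ih h1
        have e2 : E y p.2 := ih h2
        exact hE.trans e1 e2
  have hLsym : ∀ n, ∀ a b : X, (a, b) ∈ L n → (b, a) ∈ L n := by
    intro n
    induction n with
    | zero =>
      rintro a b (hp | ⟨q, hq, hq'⟩)
      · exact Or.inr ⟨(a, b), hp, rfl⟩
      · refine Or.inl ?_
        have : q = (b, a) := by
          have := congrArg Prod.swap hq'
          simpa using this
        rwa [this] at hq
    | succ n ih =>
      intro a b hab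
      rw [hLsucc n] at hab ⊢
      rcases hab with ((hp | (hp | ⟨q, hq, hq'⟩)) | ⟨y, h1, h2⟩)
      · exact Or.inl (Or.inl (ih a b hp))
      · exact Or.inl (Or.inr (Or.inr ⟨(a, b), hp, rfl⟩))
      · refine Or.inl (Or.inr (Or.inl ?_))
        have : q = (b, a) := by
          have := congrArg Prod.swap hq'
          simpa using this
        rwa [this] at hq
      · exact Or.inr ⟨y, ih y b h2, ih a y h1⟩
  have hLmono : Monotone L := by
    refine monotone_nat_of_le_succ (fun n => ?_)
    intro p hp
    exact Or.inl (Or.inl hp)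
  have hKsubL : ∀ n, K n ⊆ L n := by
    intro n
    cases n with
    | zero => exact fun p hp => Or.inl hp
    | succ n => exact fun p hp => Or.inl (Or.inr (Or.inl hp))
  have hcomp : ∀ n (a b c : X), (a, b) ∈ L n → (b, c) ∈ L n → (a, c) ∈ L (n+1) := by
    intro n a b c h1 h2
    exact Or.inr ⟨b, h1, h2⟩
  have hEL : ∀ x y : X, E x y → ∃ n, (x, y) ∈ L n := by
    intro x y hxy
    have : (x, y) ∈ ⋃ n, K n := by rw [← hKE]; exact hxy
    obtain ⟨n, hn⟩ := Set.mem_iUnion.mp this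
    exact ⟨n, hKsubL n hn⟩
  -- countable family of closed balls
  obtain ⟨u, hu⟩ := TopologicalSpace.exists_dense_seq X
  set V : ℕ → Set X := fun k => Metric.closedBall (u k.unpair.1) (1 / (k.unpair.2 + 1)) with hV
  have hVclosed : ∀ k, IsClosed (V k) := fun k => Metric.isClosed_closedBall
  have hVsep : ∀ (x : X) (D : Set X), IsClosed D → x ∉ D → ∀ m : ℕ,
      ∃ k, m ≤ k ∧ x ∈ V k ∧ ∀ y ∈ V k, y ∉ D := by
    intro x D hD hxD m
    have hopen : Dᶜ ∈ nhds x := hD.isOpen_compl.mem_nhds hxD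
    obtain ⟨ε, hε, hball⟩ := Metric.mem_nhds_iff.mp hopen
    obtain ⟨j0, hj0⟩ := exists_nat_gt (2 / ε)
    set j : ℕ := max m j0 with hj
    have hjε : 2 / ((j : ℝ) + 1) < ε := by
      have h1 : (2 : ℝ) / ε < (j : ℝ) + 1 := by
        have : (j0 : ℝ) ≤ j := by exact_mod_cast le_max_right m j0
        linarith
      rw [div_lt_iff₀ (by positivity)] at h1 ⊢
      nlinarith
    obtain ⟨i, hi⟩ := hu.exists_dist_lt x (show (0:ℝ) < 1 / ((j:ℝ) + 1) by positivity)
    refine ⟨Nat.pair i j, ?_, ?_, ?_⟩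
    · exact le_trans (le_max_left m j0) (Nat.right_le_pair i j)
    · simp only [hV, Nat.unpair_pair]
      rw [Metric.mem_closedBall]
      push_cast
      have hcomm : dist x (u i) = dist (u i) x := dist_comm _ _
      linarith
    · intro y hy hyD
      simp only [hV, Nat.unpair_pair, Metric.mem_closedBall] at hy
      have hdist : dist y x < ε := by
        have h1 : dist y x ≤ dist y (u i) + dist (u i) x := dist_triangle y (u i) x
        have hcomm : dist x (u i) = dist (u i) x := dist_comm _ _
        push_cast at hy
        calc dist y x ≤ dist y (u i) + dist (u i) x := h1
          _ ≤ 1 / ((j:ℝ)+1) + 1 / ((j:ℝ)+1) := by linarith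
          _ = 2 / ((j:ℝ)+1) := by ring
          _ < ε := hjε
      exact hball (Metric.mem_ball.mpr hdist) hyD
  -- the sets A k n and the reduction θ
  set A : ℕ → ℕ → Set X := fun k n => {x | ∃ y, y ∈ V k ∧ (x, y) ∈ L n} with hA
  have hAmeas : ∀ k n, MeasurableSet (A k n) := by
    intro k n
    have h1 : IsCompact (L n ∩ (Set.univ ×ˢ V k)) :=
      (hLc n).inter_right (isClosed_univ.prod (hVclosed k))
    have h2 : IsCompact (Prod.fst '' (L n ∩ (Set.univ ×ˢ V k))) := h1.image continuous_fst
    have h3 : A k n = Prod.fst '' (L n ∩ (Set.univ ×ˢ V k)) := by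
      ext x
      constructor
      · rintro ⟨y, hy, hxy⟩
        exact ⟨(x, y), ⟨hxy, ⟨trivial, hy⟩⟩, rfl⟩
      · rintro ⟨⟨x', y⟩, ⟨hxy, ⟨-, hy⟩⟩, rfl⟩
        exact ⟨y, hy, hxy⟩
    rw [h3]
    exact h2.measurableSet
  have hAmono : ∀ k {n n'}, n ≤ n' → A k n ⊆ A k n' := by
    rintro k n n' hle x ⟨y, hy, hxy⟩
    exact ⟨y, hy, hLmono hle hxy⟩
  set θ : X → ℕ → ℕ := fun x k => sInf ({k} ∪ {n | x ∈ A k n}) with hθ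
  have hθne : ∀ x k, ({k} ∪ {n | x ∈ A k n} : Set ℕ).Nonempty := fun x k => ⟨k, Or.inl rfl⟩
  have hθlek : ∀ x k, θ x k ≤ k := fun x k => Nat.sInf_le (Or.inl rfl)
  have hθleA : ∀ x k n, x ∈ A k n → θ x k ≤ n := fun x k n h => Nat.sInf_le (Or.inr h)
  have hθmem : ∀ x k, θ x k < k → x ∈ A k (θ x k) := by
    intro x k hlt
    have hmem : θ x k ∈ ({k} ∪ {n | x ∈ A k n} : Set ℕ) := Nat.sInf_mem (hθne x k)
    rcases hmem with h | h
    · exact absurd h (by simp only [Set.mem_singleton_iff]; omega)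
    · exact h
  have hθlb : ∀ x k j, (∀ n ≤ j, x ∉ A k n) → j < k → j < θ x k := by
    intro x k j hnot hjk
    by_contra h
    push_neg at h
    have hlt : θ x k < k := lt_of_le_of_lt h hjk
    exact hnot (θ x k) h (hθmem x k hlt)
  refine ⟨fun x k => ((θ x k : ℕ) : ℝ), ?_, ?_⟩
  · -- measurability
    have hb : borel (ℕ → ℝ) = (inferInstance : MeasurableSpace (ℕ → ℝ)) :=
      (BorelSpace.measurable_eq (α := ℕ → ℝ)).symm
    rw [hb]
    refine measurable_pi_lambda _ (fun k => ?_)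
    have hθk : Measurable (fun x => θ x k) := by
      have hB : ∀ j : ℕ, MeasurableSet {x : X | θ x k ≤ j} := by
        intro j
        by_cases hkj : k ≤ j
        · have : {x : X | θ x k ≤ j} = Set.univ := by
            ext x; simp only [Set.mem_setOf_eq, Set.mem_univ, iff_true]
            exact le_trans (hθlek x k) hkj
          rw [this]; exact MeasurableSet.univ
        · push_neg at hkj
          have : {x : X | θ x k ≤ j} = ⋃ n ∈ Finset.range (j+1), A k n := by
            ext x
            simp only [Set.mem_setOf_eq, Set.mem_iUnion, Finset.mem_range]
            constructor
            · intro hle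
              exact ⟨θ x k, Nat.lt_succ_of_le hle, hθmem x k (lt_of_le_of_lt hle hkj)⟩
            · rintro ⟨n, hn, hxn⟩
              exact le_trans (hθleA x k n hxn) (by omega)
          rw [this]
          exact MeasurableSet.biUnion (Finset.range (j+1)).countable_toSet
            (fun n _ => hAmeas k n)
      refine measurable_to_countable' (fun j => ?_)
      cases j with
      | zero =>
        have : (fun x => θ x k) ⁻¹' {0} = {x : X | θ x k ≤ 0} := by
          ext x; simp [Nat.le_zero]
        rw [this]; exact hB 0
      | succ j =>
        have : (fun x => θ x k) ⁻¹' {j+1} = {x : X | θ x k ≤ j+1} \ {x : X | θ x k ≤ j} := by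
          ext x
          simp only [Set.mem_preimage, Set.mem_singleton_iff, Set.mem_diff, Set.mem_setOf_eq]
          omega
        rw [this]; exact (hB (j+1)).diff (hB j)
    exact (measurable_from_top (f := (Nat.cast : ℕ → ℝ))).comp hθk
  · -- the reduction property
    intro x x'
    constructor
    · intro hxx'
      obtain ⟨N, hN⟩ := hEL x x' hxx'
      have key : ∀ a b : X, (a, b) ∈ L N → ∀ k, θ b k ≤ θ a k + (N + 1) := by
        intro a b hab k
        rcases lt_or_ge (θ a k) k with hlt | hge
        · obtain ⟨y, hy, hay⟩ := hθmem a k hlt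
          have h1 : (b, a) ∈ L (max N (θ a k)) := hLmono (le_max_left _ _) (hLsym N a b hab)
          have h2 : (a, y) ∈ L (max N (θ a k)) := hLmono (le_max_right _ _) hay
          have h3 : (b, y) ∈ L (max N (θ a k) + 1) := hcomp _ b a y h1 h2
          have : θ b k ≤ max N (θ a k) + 1 := hθleA b k _ ⟨y, hy, h3⟩
          omega
        · have : θ a k = k := le_antisymm (hθlek a k) hge
          have := hθlek b k
          omega
      refine ⟨(N : ℝ) + 1, fun k => ?_⟩
      have h1 := key x x' hN k
      have h2 := key x' x (hLsym N x x' hN) k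
      rw [abs_sub_le_iff]
      constructor
      · have : (θ x k : ℝ) ≤ (θ x' k : ℝ) + ((N : ℝ) + 1) := by exact_mod_cast h2
        linarith
      · have : (θ x' k : ℝ) ≤ (θ x k : ℝ) + ((N : ℝ) + 1) := by exact_mod_cast h1
        linarith
    · rintro ⟨C, hC⟩
      by_contra hnE
      obtain ⟨r, hr⟩ := hEL x x (hE.refl x)
      set n : ℕ := r + ⌈C⌉₊ + 1 with hn
      set D : Set X := {y | (x', y) ∈ L n} with hD
      have hDclosed : IsClosed D := by
        have : D = (fun y => ((x', y) : X × X)) ⁻¹' (L n) := rfl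
        rw [this]
        exact (hLc n).isClosed.preimage (Continuous.prodMk_right x')
      have hxD : x ∉ D := by
        intro hmem
        exact hnE (hE.symm (hLE n hmem))
      obtain ⟨k, hk1, hk2, hk3⟩ := hVsep x D hDclosed hxD (n + 1)
      have hθx : θ x k ≤ r := hθleA x k r ⟨x, hk2, hr⟩
      have hθx' : n < θ x' k := by
        refine hθlb x' k n (fun m hm ⟨y, hyV, hxy⟩ => ?_) (by omega)
        exact hk3 y hyV (hLmono hm hxy)
      have hCk := hC k
      have h1 : (θ x' k : ℝ) - (θ x k : ℝ) ≤ C := by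
        have := abs_sub_le_iff.mp hCk
        linarith [this.2]
      have h2 : (C : ℝ) ≤ (⌈C⌉₊ : ℝ) := Nat.le_ceil C
      have h3 : ((n : ℕ) : ℝ) + 1 ≤ (θ x' k : ℝ) := by exact_mod_cast hθx'
      have h4 : (θ x k : ℝ) ≤ (r : ℝ) := by exact_mod_cast hθx
      have h5 : ((n : ℕ) : ℝ) = (r : ℝ) + (⌈C⌉₊ : ℝ) + 1 := by
        rw [hn]; push_cast; ring
      linarith
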